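/- For the filter function μ(λ) = β(λ) + iγ(λ) with ω > 0, T = 2π/ω, if |λ − ω|/ω ≥ 1/2 then |μ(λ)| ≤ 7/(3π). -/

import Mathlib

open Real MeasureTheory intervalIntegral

private lemma my_int_cos (c b : ℝ) (hc : c ≠ 0) :
    ∫ t in (0:ℝ)..b, Real.cos (c * t) = Real.sin (c * b) / c := by
  rw [intervalIntegral.integral_comp_mul_left (fun x => Real.cos x) hc]
  simp [integral_cos, smul_eq_mul]
  ring

private lemma my_int_sin (c b : ℝ) (hc : c ≠ 0) :
    ∫ t in (0:ℝ)..b, Real.sin (c * t) = (1 - Real.cos (c * b)) / c := by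
  rw [intervalIntegral.integral_comp_mul_left (fun x => Real.sin x) hc]
  simp [integral_sin, smul_eq_mul]
  ring

set_option maxHeartbeats 1000000 in
private lemma core (x : ℝ) (hx : 0 < x) (hc : x ≤ 1/2 ∨ 3/2 ≤ x) :
    ((3*x^2+1) * Real.sin (π*x))^2 ≤ (196/9) * (x*(x^2-1))^2 := by
  rcases hc with h | h
  · have hs0 : 0 ≤ Real.sin (π*x) :=
      Real.sin_nonneg_of_nonneg_of_le_pi (by positivity) (by nlinarith [Real.pi_pos])
    have hkey : (3*x^2+1) * Real.sin (π*x) ≤ (14/3)*(x*(1-x^2)) := by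
      rcases le_or_gt x (1/4) with h4 | h4
      · have hs : Real.sin (π*x) ≤ π*x := (Real.sin_lt (by positivity)).le
        have hp : π ≤ 3.15 := Real.pi_lt_d2.le
        have hmul := mul_le_mul_of_nonneg_left hs (show (0:ℝ) ≤ 3*x^2+1 by positivity)
        have ht1 : (0:ℝ) ≤ (3.15 - π) * ((3*x^2+1) * x) :=
          mul_nonneg (by linarith) (by positivity)
        have ht2 : (0:ℝ) ≤ x^2 * (1/4 - x) := mul_nonneg (sq_nonneg x) (by linarith)
        have ht3 : (0:ℝ) ≤ x * (1/4 - x) := mul_nonneg hx.le (by linarith)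
        nlinarith [hmul, ht1, ht2, ht3, hx.le]
      · have harg : π * x = π/2 - π*(1/2-x) := by ring
        rw [harg, Real.sin_pi_div_two_sub]
        have hux : (0:ℝ) ≤ 1/2 - x := by linarith
        have hu0 : (0:ℝ) ≤ π*(1/2-x) := mul_nonneg Real.pi_pos.le hux
        have habs : |π*(1/2-x)| ≤ 1 := by
          rw [abs_of_nonneg hu0]; nlinarith [Real.pi_lt_d2]
        have hcb := Real.cos_bound habs
        rw [abs_of_nonneg hu0] at hcb
        have hcos : Real.cos (π*(1/2-x)) ≤ 1 - (π*(1/2-x))^2/2 + (π*(1/2-x))^4*(5/96) := by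
          have := (abs_le.mp hcb).2; linarith
        have hπ2 : (9.8696:ℝ) ≤ π^2 := by nlinarith [Real.pi_gt_d6]
        have hπ2' : π^2 ≤ (9.86961:ℝ) := by nlinarith [Real.pi_lt_d6, Real.pi_gt_three]
        have hu2 : (9.8696:ℝ)*(1/2-x)^2 ≤ (π*(1/2-x))^2 := by
          nlinarith [mul_nonneg (sub_nonneg.mpr hπ2) (sq_nonneg (1/2-x))]
        have hu2' : (π*(1/2-x))^2 ≤ (9.86961:ℝ)*(1/2-x)^2 := by
          nlinarith [mul_nonneg (sub_nonneg.mpr hπ2') (sq_nonneg (1/2-x))]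
        have hu4 : (π*(1/2-x))^4 ≤ (97.41:ℝ)*(1/2-x)^4 := by
          nlinarith [mul_nonneg (sub_nonneg.mpr hu2')
            (add_nonneg (mul_nonneg (by norm_num : (0:ℝ) ≤ 9.86961) (sq_nonneg (1/2-x)))
              (sq_nonneg (π*(1/2-x)))), sq_nonneg ((1/2-x)^2)]
        have hcos2 : Real.cos (π*(1/2-x)) ≤ 1 - 4.9348*(1/2-x)^2 + 5.0734375*(1/2-x)^4 := by
          linarith
        have hmul := mul_le_mul_of_nonneg_left hcos2 (show (0:ℝ) ≤ 3*x^2+1 by positivity)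
        have h14 : (0:ℝ) ≤ x - 1/4 := by linarith
        have p1 : (0:ℝ) ≤ (1/2-x) * (x - 1/4) := mul_nonneg hux h14
        have p2 : (0:ℝ) ≤ (1/2-x)^2 * (x - 1/4) := mul_nonneg (sq_nonneg _) h14
        have p3 : (0:ℝ) ≤ (1/2-x)^3 * (x - 1/4) := mul_nonneg (pow_nonneg hux 3) h14
        have p4 : (0:ℝ) ≤ (1/2-x)^4 * (x - 1/4) := mul_nonneg (pow_nonneg hux 4) h14
        have p5 : (0:ℝ) ≤ (1/2-x)^5 * (x - 1/4) := mul_nonneg (pow_nonneg hux 5) h14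
        have q4 : (0:ℝ) ≤ (1/2-x)^4 := pow_nonneg hux 4
        have q5 : (0:ℝ) ≤ (1/2-x)^5 := pow_nonneg hux 5
        nlinarith [hmul, hux, p1, p2, p3, p4, p5, q4, q5]
    have hL : 0 ≤ (3*x^2+1) * Real.sin (π*x) := mul_nonneg (by positivity) hs0
    nlinarith [mul_self_le_mul_self hL hkey]
  · have hs : Real.sin (π*x)^2 ≤ 1 := Real.sin_sq_le_one (π*x)
    have hv : (0:ℝ) ≤ x - 3/2 := by linarith
    have h2 : 3*(3*x^2+1) ≤ 14*(x*(x^2-1)) := by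
      nlinarith [sq_nonneg (x-3/2), mul_nonneg hv (sq_nonneg (x-3/2)), mul_nonneg hv hv]
    have hw : (0:ℝ) ≤ x*(x^2-1) := by nlinarith
    have h2' : (3*x^2+1) ≤ (14/3)*(x*(x^2-1)) := by linarith
    nlinarith [mul_self_le_mul_self (show (0:ℝ) ≤ 3*x^2+1 by positivity) h2',
      mul_le_mul_of_nonneg_left hs (sq_nonneg (3*x^2+1))]

private lemma core' (ω lam : ℝ) (hω : 0 < ω) (hlam : 0 < lam)
    (hc : lam/ω ≤ 1/2 ∨ 3/2 ≤ lam/ω) :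
    ((3*lam^2+ω^2) * Real.sin (π*(lam/ω)))^2 * ω^2 ≤ (196/9) * (lam*(lam^2-ω^2))^2 := by
  have hx : 0 < lam/ω := by positivity
  have hcore := core (lam/ω) hx hc
  have h6 := mul_le_mul_of_nonneg_left hcore (show (0:ℝ) ≤ ω^6 by positivity)
  have e1 : ω^6 * (((3*(lam/ω)^2+1) * Real.sin (π*(lam/ω)))^2)
      = ((3*lam^2+ω^2) * Real.sin (π*(lam/ω)))^2 * ω^2 := by
    field_simp
  have e2 : ω^6 * ((196/9) * ((lam/ω)*((lam/ω)^2-1))^2) = (196/9) * (lam*(lam^2-ω^2))^2 := by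
    field_simp
  rw [e1, e2] at h6
  exact h6

set_option maxHeartbeats 1000000 in
/-- if |λ − ω|/ω ≥ 1/2 then |μ(λ)| ≤ 7/(3π). -/
theorem filter_bound_far (ω : ℝ) (hω : 0 < ω) (T : ℝ) (hT : T = 2 * π / ω)
    (β γ : ℝ → ℝ)
    (hβ : ∀ lam, β lam = (2 / T) * ∫ t in (0:ℝ)..T,
        (Real.cos (ω * t) - 1 / 4) * Real.cos (lam * t))
    (hγ : ∀ lam, γ lam = (2 / T) * ∫ t in (0:ℝ)..T,
        (Real.cos (ω * t) - 1 / 4) * Real.sin (lam * t))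
    (μ : ℝ → ℂ) (hμ : ∀ lam, μ lam = (β lam : ℂ) + Complex.I * (γ lam : ℂ))
    (lam : ℝ) (hlam : 0 ≤ lam) (hfar : 1 / 2 ≤ |lam - ω| / ω) :
    ‖μ lam‖ ≤ 7 / (3 * π) := by
  have hπ := Real.pi_pos
  have hT0 : 0 < T := by rw [hT]; positivity
  have hωT : ω * T = 2 * π := by rw [hT]; field_simp
  have habsmu : ‖μ lam‖ = Real.sqrt ((β lam)^2 + (γ lam)^2) := by
    rw [hμ lam, mul_comm Complex.I _, Complex.norm_add_mul_I]
  rw [habsmu]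
  have hred : (β lam)^2 + (γ lam)^2 ≤ 49/(9*π^2) → Real.sqrt ((β lam)^2 + (γ lam)^2) ≤ 7/(3*π) := by
    intro h
    calc Real.sqrt ((β lam)^2 + (γ lam)^2) ≤ Real.sqrt (49/(9*π^2)) := Real.sqrt_le_sqrt h
    _ = 7/(3*π) := by
        rw [show (49:ℝ)/(9*π^2) = (7/(3*π))^2 by field_simp; ring, Real.sqrt_sq (by positivity)]
  apply hred
  have c1 : ∀ c : ℝ, Continuous (fun t : ℝ => Real.cos (c*t)) :=
    fun c => Real.continuous_cos.comp (continuous_const.mul continuous_id)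
  have c2 : ∀ c : ℝ, Continuous (fun t : ℝ => Real.sin (c*t)) :=
    fun c => Real.continuous_sin.comp (continuous_const.mul continuous_id)
  rcases eq_or_lt_of_le hlam with h0 | hpos
  · -- lam = 0
    have hb : β lam = -(1/2) := by
      rw [hβ, ← h0]
      have hpt : ∀ t : ℝ, (Real.cos (ω*t) - 1/4) * Real.cos ((0:ℝ)*t)
          = Real.cos (ω*t) - 1/4 := by intro t; simp
      simp only [hpt]
      rw [intervalIntegral.integral_sub ((c1 ω).intervalIntegrable _ _)
        (intervalIntegrable_const), my_int_cos _ _ hω.ne', hωT]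
      simp [Real.sin_two_pi]
      field_simp
      norm_num
    have hg : γ lam = 0 := by
      rw [hγ, ← h0]
      have hpt : ∀ t : ℝ, (Real.cos (ω*t) - 1/4) * Real.sin ((0:ℝ)*t) = 0 := by
        intro t; simp
      simp only [hpt]
      simp
    rw [hb, hg]
    have h315 : π < 3.15 := Real.pi_lt_d2
    rw [le_div_iff₀ (by positivity)]
    nlinarith [h315, hπ, mul_pos hπ hπ]
  · -- lam > 0
    have hωlam : lam ≠ ω := by
      intro h; rw [h, sub_self, abs_zero, zero_div] at hfar; linarith
    have h1 : ω - lam ≠ 0 := sub_ne_zero.mpr (Ne.symm hωlam)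
    have h2 : ω + lam ≠ 0 := by positivity
    have h3 : lam ≠ 0 := ne_of_gt hpos
    have h4 : lam^2 - ω^2 ≠ 0 := by
      intro h
      have hz : (lam - ω) * (lam + ω) = 0 := by linear_combination h
      rcases mul_eq_zero.mp hz with hz1 | hz2
      · exact hωlam (by linarith)
      · nlinarith
    have hIβ : (∫ t in (0:ℝ)..T, (Real.cos (ω*t) - 1/4) * Real.cos (lam*t))
        = (1/2)*(Real.sin ((ω-lam)*T)/(ω-lam)) + (1/2)*(Real.sin ((ω+lam)*T)/(ω+lam))
          - (1/4)*(Real.sin (lam*T)/lam) := by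
      have hpt : ∀ t : ℝ, (Real.cos (ω*t) - 1/4) * Real.cos (lam*t)
          = (1/2)*Real.cos ((ω-lam)*t) + (1/2)*Real.cos ((ω+lam)*t)
            - (1/4)*Real.cos (lam*t) := by
        intro t
        rw [show (ω-lam)*t = ω*t - lam*t by ring, show (ω+lam)*t = ω*t + lam*t by ring,
          Real.cos_sub, Real.cos_add]
        ring
      simp only [hpt]
      rw [intervalIntegral.integral_sub
          (f := fun t => (1/2)*Real.cos ((ω-lam)*t) + (1/2)*Real.cos ((ω+lam)*t))
          (g := fun t => (1/4)*Real.cos (lam*t))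
          (((continuous_const.mul (c1 (ω-lam))).add (continuous_const.mul (c1 (ω+lam)))).intervalIntegrable _ _)
          ((continuous_const.mul (c1 lam)).intervalIntegrable _ _),
        intervalIntegral.integral_add
          (f := fun t => (1/2)*Real.cos ((ω-lam)*t)) (g := fun t => (1/2)*Real.cos ((ω+lam)*t))
          ((continuous_const.mul (c1 (ω-lam))).intervalIntegrable _ _)
          ((continuous_const.mul (c1 (ω+lam))).intervalIntegrable _ _),
        intervalIntegral.integral_const_mul, intervalIntegral.integral_const_mul,
        intervalIntegral.integral_const_mul,
        my_int_cos _ _ h1, my_int_cos _ _ h2, my_int_cos _ _ h3]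
    have hIγ : (∫ t in (0:ℝ)..T, (Real.cos (ω*t) - 1/4) * Real.sin (lam*t))
        = (1/2)*((1 - Real.cos ((ω+lam)*T))/(ω+lam))
          - (1/2)*((1 - Real.cos ((ω-lam)*T))/(ω-lam))
          - (1/4)*((1 - Real.cos (lam*T))/lam) := by
      have hpt : ∀ t : ℝ, (Real.cos (ω*t) - 1/4) * Real.sin (lam*t)
          = (1/2)*Real.sin ((ω+lam)*t) - (1/2)*Real.sin ((ω-lam)*t)
            - (1/4)*Real.sin (lam*t) := by
        intro t
        rw [show (ω-lam)*t = ω*t - lam*t by ring, show (ω+lam)*t = ω*t + lam*t by ring,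
          Real.sin_sub, Real.sin_add]
        ring
      simp only [hpt]
      rw [intervalIntegral.integral_sub
          (f := fun t => (1/2)*Real.sin ((ω+lam)*t) - (1/2)*Real.sin ((ω-lam)*t))
          (g := fun t => (1/4)*Real.sin (lam*t))
          (((continuous_const.mul (c2 (ω+lam))).sub (continuous_const.mul (c2 (ω-lam)))).intervalIntegrable _ _)
          ((continuous_const.mul (c2 lam)).intervalIntegrable _ _),
        intervalIntegral.integral_sub
          (f := fun t => (1/2)*Real.sin ((ω+lam)*t)) (g := fun t => (1/2)*Real.sin ((ω-lam)*t))
          ((continuous_const.mul (c2 (ω+lam))).intervalIntegrable _ _)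
          ((continuous_const.mul (c2 (ω-lam))).intervalIntegrable _ _),
        intervalIntegral.integral_const_mul, intervalIntegral.integral_const_mul,
        intervalIntegral.integral_const_mul,
        my_int_sin _ _ h1, my_int_sin _ _ h2, my_int_sin _ _ h3]
    have s1 : (ω - lam) * T = 2*π - lam*T := by rw [sub_mul, hωT]
    have s2 : (ω + lam) * T = 2*π + lam*T := by rw [add_mul, hωT]
    have hsin2 : Real.sin (2*π + lam*T) = Real.sin (lam*T) := by
      rw [Real.sin_add, Real.sin_two_pi, Real.cos_two_pi]; ring
    have hcos2 : Real.cos (2*π + lam*T) = Real.cos (lam*T) := by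
      rw [Real.cos_add, Real.sin_two_pi, Real.cos_two_pi]; ring
    have hβv : β lam = (ω/π) * ((3*lam^2+ω^2)/(4*lam*(lam^2-ω^2))) * Real.sin (lam*(2*π/ω)) := by
      rw [hβ, hIβ, s1, s2, Real.sin_two_pi_sub, hsin2, hT]
      field_simp
      ring
    have hγv : γ lam = (ω/π) * ((3*lam^2+ω^2)/(4*lam*(lam^2-ω^2)))
        * (1 - Real.cos (lam*(2*π/ω))) := by
      rw [hγ, hIγ, s1, s2, Real.cos_two_pi_sub, hcos2, hT]
      field_simp
      ring
    -- trig reduction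
    have hid : Real.sin (π*(lam/ω))^2 = 1/2 - Real.cos (lam*(2*π/ω))/2 := by
      have h := Real.sin_sq_eq_half_sub (π*(lam/ω))
      rw [show 2*(π*(lam/ω)) = lam*(2*π/ω) by ring] at h
      exact h
    have hpy := Real.sin_sq_add_cos_sq (lam*(2*π/ω))
    -- case info
    have habs2 : ω/2 ≤ |lam - ω| := by
      rw [le_div_iff₀ hω] at hfar; linarith
    have hc : lam/ω ≤ 1/2 ∨ 3/2 ≤ lam/ω := by
      rcases abs_cases (lam - ω) with ⟨he, _⟩ | ⟨he, _⟩
      · right; rw [le_div_iff₀ hω]; rw [he] at habs2; linarith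
      · left; rw [div_le_iff₀ hω]; rw [he] at habs2; linarith
    have hcore := core' ω lam hω hpos hc
    have hD : (0:ℝ) < (lam*(lam^2-ω^2))^2 := by
      have hne : lam*(lam^2-ω^2) ≠ 0 := mul_ne_zero h3 h4
      positivity
    set s := Real.sin (lam*(2*π/ω)) with hs_def
    set c := Real.cos (lam*(2*π/ω)) with hc_def
    set S := Real.sin (π*(lam/ω)) with hS_def
    have t1 : s^2 + (1 - c)^2 = 4 * S^2 := by linear_combination hpy - 4*hid
    have hC2 : (β lam)^2 + (γ lam)^2
        = (ω/π * ((3*lam^2+ω^2)/(4*lam*(lam^2-ω^2))))^2 * (4 * S^2) := by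
      rw [hβv, hγv]
      linear_combination ((ω/π * ((3*lam^2+ω^2)/(4*lam*(lam^2-ω^2))))^2) * t1
    have hC2' : (ω/π * ((3*lam^2+ω^2)/(4*lam*(lam^2-ω^2))))^2 * (4 * S^2)
        = (ω^2 * ((3*lam^2+ω^2) * S)^2) / (4*π^2 * (lam*(lam^2-ω^2))^2) := by
      field_simp
    rw [hC2, hC2', div_le_div_iff₀ (by positivity) (by positivity)]
    have hsc := mul_le_mul_of_nonneg_left hcore (show (0:ℝ) ≤ 9*π^2 by positivity)
    calc ω^2 * ((3*lam^2+ω^2)*S)^2 * (9*π^2)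
        = 9*π^2 * (((3*lam^2+ω^2)*S)^2 * ω^2) := by ring
      _ ≤ 9*π^2 * ((196/9) * (lam*(lam^2-ω^2))^2) := hsc
      _ = 49 * (4*π^2*(lam*(lam^2-ω^2))^2) := by ring
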